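/- Correctness of the marked ε-NFA for a regular expression with tests: For an ω-word w = w₀w₁w₂⋯ and n ≥ 0, the following are equivalent: (1) the Thompson automaton A_r has an accepting run q₀q₁⋯q_n on w₀⋯w_{n-1} with ε-paths π_i (0 ≤ i ≤ n) such that the suffix w_i w_{i+1}⋯ satisfies the conjunction of all test markings visited along π_i, for every i; (2) (0, n) ∈ R(r, w). -/

import Mathlib

namespace PLDLPaper

/-- Propositional formulas over atomic propositions `P`. -/
inductive PropF (P : Type) where
  | tru : PropF P
  | fls : PropF P
  | atom : P → PropF P
  | natom : P → PropF P
  | conj : PropF P → PropF P → PropF P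
  | disj : PropF P → PropF P → PropF P

def PropF.eval {P : Type} (A : P → Prop) : PropF P → Prop
  | .tru => True
  | .fls => False
  | .atom p => A p
  | .natom p => ¬ A p
  | .conj φ ψ => φ.eval A ∧ ψ.eval A
  | .disj φ ψ => φ.eval A ∨ ψ.eval A

mutual
/-- PLDL formulas (in negation normal form) over atomic propositions `P`
and variables `V`, extended with the fresh coloring proposition `p`
(`colp`/`colnp`) and the changepoint-bounded operators of LDL_cp. -/
inductive Frm (P V : Type) where
  | pos : P → Frm P V
  | neg : P → Frm P V
  | colp : Frm P V
  | colnp : Frm P V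
  | and : Frm P V → Frm P V → Frm P V
  | or : Frm P V → Frm P V → Frm P V
  | dia : RE P V → Frm P V → Frm P V
  | box : RE P V → Frm P V → Frm P V
  | diaLe : RE P V → V → Frm P V → Frm P V
  | boxLe : RE P V → V → Frm P V → Frm P V
  | diaCp : RE P V → Frm P V → Frm P V
  | boxCp : RE P V → Frm P V → Frm P V
/-- Regular expressions with tests. -/
inductive RE (P V : Type) where
  | prop : PropF P → RE P V
  | test : Frm P V → RE P V
  | plus : RE P V → RE P V → RE P V
  | comp : RE P V → RE P V → RE P V
  | star : RE P V → RE P V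
end

/-- `n` is a changepoint of the color sequence `c`. -/
def Changepoint (c : ℕ → Prop) (n : ℕ) : Prop :=
  n = 0 ∨ ¬ (c (n - 1) ↔ c n)

/-- The infix at positions `n, …, n + j - 1` contains at most one changepoint. -/
def AtMostOneCP (c : ℕ → Prop) (n j : ℕ) : Prop :=
  ∀ m₁ m₂, n ≤ m₁ → m₁ < n + j → n ≤ m₂ → m₂ < n + j →
    Changepoint c m₁ → Changepoint c m₂ → m₁ = m₂

mutual
/-- Satisfaction `(w, n, α) ⊨ φ`; the color of position `n` (truth value of the
fresh proposition `p`) is `c n`. -/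
def Sat {P V : Type} (w : ℕ → P → Prop) (c : ℕ → Prop) (α : V → ℕ) :
    Frm P V → ℕ → Prop
  | .pos p, n => w n p
  | .neg p, n => ¬ w n p
  | .colp, n => c n
  | .colnp, n => ¬ c n
  | .and φ ψ, n => Sat w c α φ n ∧ Sat w c α ψ n
  | .or φ ψ, n => Sat w c α φ n ∨ Sat w c α ψ n
  | .dia r ψ, n => ∃ j, Match w c α r n (n + j) ∧ Sat w c α ψ (n + j)
  | .box r ψ, n => ∀ j, Match w c α r n (n + j) → Sat w c α ψ (n + j)
  | .diaLe r z ψ, n => ∃ j, j ≤ α z ∧ Match w c α r n (n + j) ∧ Sat w c α ψ (n + j)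
  | .boxLe r z ψ, n => ∀ j, j ≤ α z → Match w c α r n (n + j) → Sat w c α ψ (n + j)
  | .diaCp r ψ, n => ∃ j, Match w c α r n (n + j) ∧ AtMostOneCP c n j ∧ Sat w c α ψ (n + j)
  | .boxCp r ψ, n => ∀ j, Match w c α r n (n + j) → AtMostOneCP c n j → Sat w c α ψ (n + j)
/-- The match relation `R(r, w, α)`. -/
def Match {P V : Type} (w : ℕ → P → Prop) (c : ℕ → Prop) (α : V → ℕ) :
    RE P V → ℕ → ℕ → Prop
  | .prop φ, m, n => n = m + 1 ∧ φ.eval (w m)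
  | .test ψ, m, n => n = m ∧ Sat w c α ψ m
  | .plus r₀ r₁, m, n => Match w c α r₀ m n ∨ Match w c α r₁ m n
  | .comp r₀ r₁, m, n => ∃ k, Match w c α r₀ m k ∧ Match w c α r₁ k n
  | .star r, m, n => ∃ (k : ℕ) (f : ℕ → ℕ), f 0 = m ∧ f k = n ∧
      ∀ i, i < k → Match w c α r (f i) (f (i + 1))
end

variable {P V : Type}

mutual
/-- Size of a formula. -/
def Frm.size : Frm P V → ℕ
  | .pos _ => 1
  | .neg _ => 1
  | .colp => 1
  | .colnp => 1
  | .and φ ψ => 1 + φ.size + ψ.size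
  | .or φ ψ => 1 + φ.size + ψ.size
  | .dia r ψ => 1 + r.size + ψ.size
  | .box r ψ => 1 + r.size + ψ.size
  | .diaLe r _ ψ => 1 + r.size + ψ.size
  | .boxLe r _ ψ => 1 + r.size + ψ.size
  | .diaCp r ψ => 1 + r.size + ψ.size
  | .boxCp r ψ => 1 + r.size + ψ.size
/-- Size (length) of a regular expression. -/
def RE.size : RE P V → ℕ
  | .prop _ => 1
  | .test ψ => 1 + ψ.size
  | .plus r₀ r₁ => 1 + r₀.size + r₁.size
  | .comp r₀ r₁ => 1 + r₀.size + r₁.size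
  | .star r => 1 + r.size
end

mutual
/-- Variables parameterizing diamond operators. -/
def Frm.dvars [DecidableEq V] : Frm P V → Finset V
  | .pos _ => ∅
  | .neg _ => ∅
  | .colp => ∅
  | .colnp => ∅
  | .and φ ψ => φ.dvars ∪ ψ.dvars
  | .or φ ψ => φ.dvars ∪ ψ.dvars
  | .dia r ψ => r.dvars ∪ ψ.dvars
  | .box r ψ => r.dvars ∪ ψ.dvars
  | .diaLe r z ψ => insert z (r.dvars ∪ ψ.dvars)
  | .boxLe r _ ψ => r.dvars ∪ ψ.dvars
  | .diaCp r ψ => r.dvars ∪ ψ.dvars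
  | .boxCp r ψ => r.dvars ∪ ψ.dvars
def RE.dvars [DecidableEq V] : RE P V → Finset V
  | .prop _ => ∅
  | .test ψ => ψ.dvars
  | .plus r₀ r₁ => r₀.dvars ∪ r₁.dvars
  | .comp r₀ r₁ => r₀.dvars ∪ r₁.dvars
  | .star r => r.dvars
end

mutual
/-- Variables parameterizing box operators. -/
def Frm.bvars [DecidableEq V] : Frm P V → Finset V
  | .pos _ => ∅
  | .neg _ => ∅
  | .colp => ∅
  | .colnp => ∅
  | .and φ ψ => φ.bvars ∪ ψ.bvars
  | .or φ ψ => φ.bvars ∪ ψ.bvars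
  | .dia r ψ => r.bvars ∪ ψ.bvars
  | .box r ψ => r.bvars ∪ ψ.bvars
  | .diaLe r _ ψ => r.bvars ∪ ψ.bvars
  | .boxLe r z ψ => insert z (r.bvars ∪ ψ.bvars)
  | .diaCp r ψ => r.bvars ∪ ψ.bvars
  | .boxCp r ψ => r.bvars ∪ ψ.bvars
def RE.bvars [DecidableEq V] : RE P V → Finset V
  | .prop _ => ∅
  | .test ψ => ψ.bvars
  | .plus r₀ r₁ => r₀.bvars ∪ r₁.bvars
  | .comp r₀ r₁ => r₀.bvars ∪ r₁.bvars
  | .star r => r.bvars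
end

mutual
/-- The formula contains no changepoint-bounded operators. -/
def Frm.noCp : Frm P V → Prop
  | .pos _ => True
  | .neg _ => True
  | .colp => True
  | .colnp => True
  | .and φ ψ => φ.noCp ∧ ψ.noCp
  | .or φ ψ => φ.noCp ∧ ψ.noCp
  | .dia r ψ => r.noCp ∧ ψ.noCp
  | .box r ψ => r.noCp ∧ ψ.noCp
  | .diaLe r _ ψ => r.noCp ∧ ψ.noCp
  | .boxLe r _ ψ => r.noCp ∧ ψ.noCp
  | .diaCp _ _ => False
  | .boxCp _ _ => False
def RE.noCp : RE P V → Prop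
  | .prop _ => True
  | .test ψ => ψ.noCp
  | .plus r₀ r₁ => r₀.noCp ∧ r₁.noCp
  | .comp r₀ r₁ => r₀.noCp ∧ r₁.noCp
  | .star r => r.noCp
end

mutual
/-- The formula does not mention the fresh coloring proposition `p`. -/
def Frm.noCol : Frm P V → Prop
  | .pos _ => True
  | .neg _ => True
  | .colp => False
  | .colnp => False
  | .and φ ψ => φ.noCol ∧ ψ.noCol
  | .or φ ψ => φ.noCol ∧ ψ.noCol
  | .dia r ψ => r.noCol ∧ ψ.noCol
  | .box r ψ => r.noCol ∧ ψ.noCol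
  | .diaLe r _ ψ => r.noCol ∧ ψ.noCol
  | .boxLe r _ ψ => r.noCol ∧ ψ.noCol
  | .diaCp r ψ => r.noCol ∧ ψ.noCol
  | .boxCp r ψ => r.noCol ∧ ψ.noCol
def RE.noCol : RE P V → Prop
  | .prop _ => True
  | .test ψ => ψ.noCol
  | .plus r₀ r₁ => r₀.noCol ∧ r₁.noCol
  | .comp r₀ r₁ => r₀.noCol ∧ r₁.noCol
  | .star r => r.noCol
end

/-- A genuine PLDL formula: no changepoint-bounded operators and no
occurrence of the fresh proposition `p`. -/
def IsPLDL (φ : Frm P V) : Prop := φ.noCp ∧ φ.noCol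

/-- Well-formedness: no variable parameterizes both a diamond and a box. -/
def WellFormed [DecidableEq V] (φ : Frm P V) : Prop :=
  ∀ z, z ∈ φ.dvars → z ∉ φ.bvars

/-- Dualization: the negation of a formula, pushing negations to atoms. -/
def Frm.not : Frm P V → Frm P V
  | .pos p => .neg p
  | .neg p => .pos p
  | .colp => .colnp
  | .colnp => .colp
  | .and φ ψ => .or φ.not ψ.not
  | .or φ ψ => .and φ.not ψ.not
  | .dia r ψ => .box r ψ.not
  | .box r ψ => .dia r ψ.not
  | .diaLe r z ψ => .boxLe r z ψ.not
  | .boxLe r z ψ => .diaLe r z ψ.not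
  | .diaCp r ψ => .boxCp r ψ.not
  | .boxCp r ψ => .diaCp r ψ.not

mutual
/-- `rel φ`: replace every parameterized operator by the corresponding
changepoint-bounded operator. -/
def Frm.rel : Frm P V → Frm P V
  | .pos p => .pos p
  | .neg p => .neg p
  | .colp => .colp
  | .colnp => .colnp
  | .and φ ψ => .and φ.rel ψ.rel
  | .or φ ψ => .or φ.rel ψ.rel
  | .dia r ψ => .dia r.rel ψ.rel
  | .box r ψ => .box r.rel ψ.rel
  | .diaLe r _ ψ => .diaCp r.rel ψ.rel
  | .boxLe r _ ψ => .boxCp r.rel ψ.rel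
  | .diaCp r ψ => .diaCp r.rel ψ.rel
  | .boxCp r ψ => .boxCp r.rel ψ.rel
def RE.rel : RE P V → RE P V
  | .prop φ => .prop φ
  | .test ψ => .test ψ.rel
  | .plus r₀ r₁ => .plus r₀.rel r₁.rel
  | .comp r₀ r₁ => .comp r₀.rel r₁.rel
  | .star r => .star r.rel
end

/-- `θ_∞p = [tt*]⟨tt*⟩p`: the fresh proposition `p` holds infinitely often. -/
def thetaInfP : Frm P V := .box (.star (.prop .tru)) (.dia (.star (.prop .tru)) .colp)

/-- `θ_∞¬p`. -/
def thetaInfNP : Frm P V := .box (.star (.prop .tru)) (.dia (.star (.prop .tru)) .colnp)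

/-- `c(φ) = rel(φ) ∧ θ_∞p ∧ θ_∞¬p`. -/
def cFrm (φ : Frm P V) : Frm P V := .and φ.rel (.and thetaInfP thetaInfNP)

/-- `[i, j)` is a block of the coloring `c`: `i` and `j` are consecutive
changepoints. -/
def IsBlock (c : ℕ → Prop) (i j : ℕ) : Prop :=
  i < j ∧ Changepoint c i ∧ Changepoint c j ∧
    ∀ m, i < m → m < j → ¬ Changepoint c m

/-- Infinitely many changepoints. -/
def InfCP (c : ℕ → Prop) : Prop := ∀ N, ∃ n, N < n ∧ Changepoint c n

/-- Every block has length at most `k` (and there are infinitely many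
changepoints). -/
def kBounded (c : ℕ → Prop) (k : ℕ) : Prop :=
  InfCP c ∧ ∀ i j, IsBlock c i j → j - i ≤ k

/-- Infinitely many changepoints and every block has length at least `k`. -/
def kSpaced (c : ℕ → Prop) (k : ℕ) : Prop :=
  InfCP c ∧ ∀ i j, IsBlock c i j → k ≤ j - i

/-- The states of the Thompson automaton `A_r` of a regular expression `r`. -/
inductive TState (P V : Type) : RE P V → Type where
  | propInit (φ : PropF P) : TState P V (.prop φ)
  | propFin (φ : PropF P) : TState P V (.prop φ)
  | testInit (ψ : Frm P V) : TState P V (.test ψ)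
  | testFin (ψ : Frm P V) : TState P V (.test ψ)
  | plusInit (r₀ r₁ : RE P V) : TState P V (.plus r₀ r₁)
  | plusFin (r₀ r₁ : RE P V) : TState P V (.plus r₀ r₁)
  | plusL : {r₀ r₁ : RE P V} → TState P V r₀ → TState P V (.plus r₀ r₁)
  | plusR : {r₀ r₁ : RE P V} → TState P V r₁ → TState P V (.plus r₀ r₁)
  | compL : {r₀ r₁ : RE P V} → TState P V r₀ → TState P V (.comp r₀ r₁)
  | compR : {r₀ r₁ : RE P V} → TState P V r₁ → TState P V (.comp r₀ r₁)
  | starInit (r : RE P V) : TState P V (.star r)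
  | starFin (r : RE P V) : TState P V (.star r)
  | starIn : {r : RE P V} → TState P V r → TState P V (.star r)

variable {P V : Type}

/-- Initial state of `A_r`. -/
def tInit : (r : RE P V) → TState P V r
  | .prop φ => .propInit φ
  | .test ψ => .testInit ψ
  | .plus r₀ r₁ => .plusInit r₀ r₁
  | .comp r₀ _ => .compL (tInit r₀)
  | .star r => .starInit r

/-- Final states of `A_r`. -/
def tFinal : (r : RE P V) → TState P V r → Prop
  | .prop _, .propFin _ => True
  | .prop _, _ => False
  | .test _, .testFin _ => True
  | .test _, _ => False
  | .plus _ _, .plusFin _ _ => True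
  | .plus _ _, _ => False
  | .comp _ r₁, .compR s => tFinal r₁ s
  | .comp _ _, _ => False
  | .star _, .starFin _ => True
  | .star _, _ => False

/-- Letter-labeled transitions of `A_r`. -/
def tStep : (r : RE P V) → TState P V r → (P → Prop) → TState P V r → Prop
  | .prop φ, .propInit _, a, q' => q' = .propFin φ ∧ PropF.eval a φ
  | .prop _, _, _, _ => False
  | .test _, _, _, _ => False
  | .plus r₀ _, .plusL s, a, q' =>
      match q' with | .plusL s' => tStep r₀ s a s' | _ => False
  | .plus _ r₁, .plusR s, a, q' =>
      match q' with | .plusR s' => tStep r₁ s a s' | _ => False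
  | .plus _ _, _, _, _ => False
  | .comp r₀ _, .compL s, a, q' =>
      match q' with | .compL s' => tStep r₀ s a s' | _ => False
  | .comp _ r₁, .compR s, a, q' =>
      match q' with | .compR s' => tStep r₁ s a s' | _ => False
  | .star r, .starIn s, a, q' =>
      match q' with | .starIn s' => tStep r s a s' | _ => False
  | .star _, _, _, _ => False

/-- ε-transitions of `A_r` (Thompson construction). -/
def tEps : (r : RE P V) → TState P V r → TState P V r → Prop
  | .prop _, _, _ => False
  | .test ψ, .testInit _, q' => q' = .testFin ψ
  | .test _, _, _ => False
  | .plus r₀ r₁, .plusInit _ _, q' =>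
      q' = .plusL (tInit r₀) ∨ q' = .plusR (tInit r₁)
  | .plus r₀ _, .plusL s, q' =>
      match q' with
      | .plusL s' => tEps r₀ s s'
      | .plusFin _ _ => tFinal r₀ s
      | _ => False
  | .plus _ r₁, .plusR s, q' =>
      match q' with
      | .plusR s' => tEps r₁ s s'
      | .plusFin _ _ => tFinal r₁ s
      | _ => False
  | .plus _ _, .plusFin _ _, _ => False
  | .comp r₀ r₁, .compL s, q' =>
      match q' with
      | .compL s' => tEps r₀ s s'
      | .compR s' => tFinal r₀ s ∧ s' = tInit r₁
  | .comp _ r₁, .compR s, q' =>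
      match q' with | .compR s' => tEps r₁ s s' | _ => False
  | .star r, .starInit _, q' => q' = .starFin r ∨ q' = .starIn (tInit r)
  | .star r, .starIn s, q' =>
      match q' with
      | .starIn s' => tEps r s s' ∨ (tFinal r s ∧ s' = tInit r)
      | .starFin _ => tFinal r s
      | _ => False
  | .star _, .starFin _, _ => False

/-- Marking of states by tests. -/
def tMark : (r : RE P V) → TState P V r → Option (Frm P V)
  | .test ψ, .testInit _ => some ψ
  | .plus r₀ _, .plusL s => tMark r₀ s
  | .plus _ r₁, .plusR s => tMark r₁ s
  | .comp r₀ _, .compL s => tMark r₀ s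
  | .comp _ r₁, .compR s => tMark r₁ s
  | .star r, .starIn s => tMark r s
  | _, _ => none

/-- `l` is an ε-path of `A_r` (nonempty, consecutive states linked by
ε-transitions). -/
def TEpsPath (r : RE P V) (l : List (TState P V r)) : Prop :=
  l ≠ [] ∧ l.Chain' (tEps r)

section ThompsonAux

variable {P V : Type}

/-- All tests marking a state hold at position `m`. -/
def TOk (w : ℕ → P → Prop) (c : ℕ → Prop) (α : V → ℕ) (r : RE P V)
    (q : TState P V r) (m : ℕ) : Prop :=
  ∀ ψ, tMark r q = some ψ → Sat w c α ψ m

/-- Runs of the marked Thompson automaton, checking marks along the way. -/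
inductive TRun (w : ℕ → P → Prop) (c : ℕ → Prop) (α : V → ℕ) (r : RE P V) :
    TState P V r → ℕ → TState P V r → ℕ → Prop where
  | refl (q : TState P V r) (n : ℕ) : TRun w c α r q n q n
  | eps {q q' q'' : TState P V r} {m n : ℕ} :
      tEps r q q' → TOk w c α r q m → TRun w c α r q' m q'' n →
      TRun w c α r q m q'' n
  | step {q q' q'' : TState P V r} {m n : ℕ} :
      tStep r q (w m) q' → TOk w c α r q m → TRun w c α r q' (m + 1) q'' n →
      TRun w c α r q m q'' n

theorem tMark_final {r : RE P V} {q : TState P V r} (h : tFinal r q) :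
    tMark r q = none := by
  induction q with
  | propInit => rfl
  | propFin => rfl
  | testInit ψ => simp [tFinal] at h
  | testFin => rfl
  | plusInit => rfl
  | plusFin => rfl
  | plusL s ih => simp [tFinal] at h
  | plusR s ih => simp [tFinal] at h
  | compL s ih => simp [tFinal] at h
  | compR s ih => exact ih h
  | starInit => rfl
  | starFin => rfl
  | starIn s ih => simp [tFinal] at h

variable {w : ℕ → P → Prop} {cc : ℕ → Prop} {α : V → ℕ}

theorem TOk_of_none {r : RE P V} {q : TState P V r} {m : ℕ}
    (h : tMark r q = none) : TOk w cc α r q m := by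
  intro ψ hψ; rw [h] at hψ; cases hψ

theorem TOk_of_final {r : RE P V} {q : TState P V r} {m : ℕ}
    (h : tFinal r q) : TOk w cc α r q m := TOk_of_none (tMark_final h)

theorem TRun.trans {r : RE P V} {a b d : TState P V r} {m k n : ℕ}
    (h1 : TRun w cc α r a m b k) (h2 : TRun w cc α r b k d n) :
    TRun w cc α r a m d n := by
  induction h1 with
  | refl => exact h2
  | eps he ho _ ih => exact .eps he ho (ih h2)
  | step hs ho _ ih => exact .step hs ho (ih h2)

theorem TRun.le {r : RE P V} {a b : TState P V r} {m n : ℕ}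
    (h : TRun w cc α r a m b n) : m ≤ n := by
  induction h with
  | refl => exact le_rfl
  | eps _ _ _ ih => exact ih
  | step _ _ _ ih => omega

/-- A state with no outgoing transitions is stuck. -/
theorem TRun.stuck {r : RE P V} {q q' : TState P V r} {m n : ℕ}
    (h : TRun w cc α r q m q' n)
    (he : ∀ x, ¬ tEps r q x) (hs : ∀ a x, ¬ tStep r q a x) :
    q' = q ∧ n = m := by
  cases h with
  | refl => exact ⟨rfl, rfl⟩
  | eps h1 _ _ => exact absurd h1 (he _)
  | step h1 _ _ => exact absurd h1 (hs _ _)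

/-! ### Lifting runs of subautomata -/

theorem TRun.liftPlusL {r₀ r₁ : RE P V} {s s' : TState P V r₀} {m n : ℕ}
    (h : TRun w cc α r₀ s m s' n) :
    TRun w cc α (.plus r₀ r₁) (.plusL s) m (.plusL s') n := by
  induction h with
  | refl => exact .refl _ _
  | @eps q q2 q'' m n he ho _ ih => exact .eps (q' := .plusL q2) he (fun ψ hψ => ho ψ hψ) ih
  | @step q q2 q'' m n hs ho _ ih => exact .step (q' := .plusL q2) hs (fun ψ hψ => ho ψ hψ) ih

theorem TRun.liftPlusR {r₀ r₁ : RE P V} {s s' : TState P V r₁} {m n : ℕ}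
    (h : TRun w cc α r₁ s m s' n) :
    TRun w cc α (.plus r₀ r₁) (.plusR s) m (.plusR s') n := by
  induction h with
  | refl => exact .refl _ _
  | @eps q q2 q'' m n he ho _ ih => exact .eps (q' := .plusR q2) he (fun ψ hψ => ho ψ hψ) ih
  | @step q q2 q'' m n hs ho _ ih => exact .step (q' := .plusR q2) hs (fun ψ hψ => ho ψ hψ) ih

theorem TRun.liftCompL {r₀ r₁ : RE P V} {s s' : TState P V r₀} {m n : ℕ}
    (h : TRun w cc α r₀ s m s' n) :
    TRun w cc α (.comp r₀ r₁) (.compL s) m (.compL s') n := by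
  induction h with
  | refl => exact .refl _ _
  | @eps q q2 q'' m n he ho _ ih => exact .eps (q' := .compL q2) he (fun ψ hψ => ho ψ hψ) ih
  | @step q q2 q'' m n hs ho _ ih => exact .step (q' := .compL q2) hs (fun ψ hψ => ho ψ hψ) ih

theorem TRun.liftCompR {r₀ r₁ : RE P V} {s s' : TState P V r₁} {m n : ℕ}
    (h : TRun w cc α r₁ s m s' n) :
    TRun w cc α (.comp r₀ r₁) (.compR s) m (.compR s') n := by
  induction h with
  | refl => exact .refl _ _
  | @eps q q2 q'' m n he ho _ ih => exact .eps (q' := .compR q2) he (fun ψ hψ => ho ψ hψ) ih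
  | @step q q2 q'' m n hs ho _ ih => exact .step (q' := .compR q2) hs (fun ψ hψ => ho ψ hψ) ih

theorem TRun.liftStarIn {r : RE P V} {s s' : TState P V r} {m n : ℕ}
    (h : TRun w cc α r s m s' n) :
    TRun w cc α (.star r) (.starIn s) m (.starIn s') n := by
  induction h with
  | refl => exact .refl _ _
  | @eps q q2 q'' m n he ho _ ih => exact .eps (q' := .starIn q2) (Or.inl he) (fun ψ hψ => ho ψ hψ) ih
  | @step q q2 q'' m n hs ho _ ih => exact .step (q' := .starIn q2) hs (fun ψ hψ => ho ψ hψ) ih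

theorem tMark_plusL (r₀ r₁ : RE P V) (s : TState P V r₀) :
    tMark (.plus r₀ r₁) (.plusL s) = tMark r₀ s := rfl
theorem tMark_plusR (r₀ r₁ : RE P V) (s : TState P V r₁) :
    tMark (.plus r₀ r₁) (.plusR s) = tMark r₁ s := rfl
theorem tMark_compL (r₀ r₁ : RE P V) (s : TState P V r₀) :
    tMark (.comp r₀ r₁) (.compL s) = tMark r₀ s := rfl
theorem tMark_compR (r₀ r₁ : RE P V) (s : TState P V r₁) :
    tMark (.comp r₀ r₁) (.compR s) = tMark r₁ s := rfl
theorem tMark_starIn (r : RE P V) (s : TState P V r) :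
    tMark (.star r) (.starIn s) = tMark r s := rfl

end ThompsonAux
section ThompsonInv

variable {P V : Type} {w : ℕ → P → Prop} {cc : ℕ → Prop} {α : V → ℕ}

theorem TRun.propFin_inv {φ : PropF P} {q' : TState P V (.prop φ)} {m n : ℕ}
    (h : TRun w cc α (.prop φ) (.propFin φ) m q' n) :
    q' = .propFin φ ∧ n = m :=
  h.stuck (fun _ hx => hx) (fun _ _ hx => hx)

theorem TRun.testFin_inv {ψ : Frm P V} {q' : TState P V (.test ψ)} {m n : ℕ}
    (h : TRun w cc α (.test ψ) (.testFin ψ) m q' n) :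
    q' = .testFin ψ ∧ n = m :=
  h.stuck (fun _ hx => hx) (fun _ _ hx => hx)

theorem TRun.plusFin_inv {r₀ r₁ : RE P V} {q' : TState P V (.plus r₀ r₁)} {m n : ℕ}
    (h : TRun w cc α (.plus r₀ r₁) (.plusFin r₀ r₁) m q' n) :
    q' = .plusFin r₀ r₁ ∧ n = m :=
  h.stuck (fun _ hx => hx) (fun _ _ hx => hx)

theorem TRun.starFin_inv {r : RE P V} {q' : TState P V (.star r)} {m n : ℕ}
    (h : TRun w cc α (.star r) (.starFin r) m q' n) :
    q' = .starFin r ∧ n = m :=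
  h.stuck (fun _ hx => hx) (fun _ _ hx => hx)

theorem TRun.plusL_inv {r₀ r₁ : RE P V} {q q' : TState P V (.plus r₀ r₁)} {m n : ℕ}
    (h : TRun w cc α (.plus r₀ r₁) q m q' n) :
    ∀ s, q = .plusL s →
      (∃ s', q' = .plusL s' ∧ TRun w cc α r₀ s m s' n) ∨
      (q' = .plusFin r₀ r₁ ∧ ∃ s', tFinal r₀ s' ∧ TRun w cc α r₀ s m s' n) := by
  induction h with
  | refl q n =>
    rintro s rfl
    exact .inl ⟨s, rfl, .refl _ _⟩
  | @eps q q2 q'' m n he ho hr ih =>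
    rintro s rfl
    cases q2 with
    | plusInit => exact absurd he (by simp [tEps])
    | plusFin =>
      obtain ⟨rfl, rfl⟩ := hr.plusFin_inv
      exact .inr ⟨rfl, s, he, .refl _ _⟩
    | plusL s2 =>
      rcases ih s2 rfl with ⟨s', rfl, hrun⟩ | ⟨rfl, s', hf, hrun⟩
      · exact .inl ⟨s', rfl, .eps he (fun ψ hψ => ho ψ hψ) hrun⟩
      · exact .inr ⟨rfl, s', hf, .eps he (fun ψ hψ => ho ψ hψ) hrun⟩
    | plusR s2 => exact absurd he (by simp [tEps])
  | @step q q2 q'' m n hs ho hr ih =>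
    rintro s rfl
    cases q2 with
    | plusInit => exact absurd hs (by simp [tStep])
    | plusFin => exact absurd hs (by simp [tStep])
    | plusL s2 =>
      rcases ih s2 rfl with ⟨s', rfl, hrun⟩ | ⟨rfl, s', hf, hrun⟩
      · exact .inl ⟨s', rfl, .step hs (fun ψ hψ => ho ψ hψ) hrun⟩
      · exact .inr ⟨rfl, s', hf, .step hs (fun ψ hψ => ho ψ hψ) hrun⟩
    | plusR s2 => exact absurd hs (by simp [tStep])

theorem TRun.plusR_inv {r₀ r₁ : RE P V} {q q' : TState P V (.plus r₀ r₁)} {m n : ℕ}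
    (h : TRun w cc α (.plus r₀ r₁) q m q' n) :
    ∀ s, q = .plusR s →
      (∃ s', q' = .plusR s' ∧ TRun w cc α r₁ s m s' n) ∨
      (q' = .plusFin r₀ r₁ ∧ ∃ s', tFinal r₁ s' ∧ TRun w cc α r₁ s m s' n) := by
  induction h with
  | refl q n =>
    rintro s rfl
    exact .inl ⟨s, rfl, .refl _ _⟩
  | @eps q q2 q'' m n he ho hr ih =>
    rintro s rfl
    cases q2 with
    | plusInit => exact absurd he (by simp [tEps])
    | plusFin =>
      obtain ⟨rfl, rfl⟩ := hr.plusFin_inv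
      exact .inr ⟨rfl, s, he, .refl _ _⟩
    | plusR s2 =>
      rcases ih s2 rfl with ⟨s', rfl, hrun⟩ | ⟨rfl, s', hf, hrun⟩
      · exact .inl ⟨s', rfl, .eps he (fun ψ hψ => ho ψ hψ) hrun⟩
      · exact .inr ⟨rfl, s', hf, .eps he (fun ψ hψ => ho ψ hψ) hrun⟩
    | plusL s2 => exact absurd he (by simp [tEps])
  | @step q q2 q'' m n hs ho hr ih =>
    rintro s rfl
    cases q2 with
    | plusInit => exact absurd hs (by simp [tStep])
    | plusFin => exact absurd hs (by simp [tStep])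
    | plusR s2 =>
      rcases ih s2 rfl with ⟨s', rfl, hrun⟩ | ⟨rfl, s', hf, hrun⟩
      · exact .inl ⟨s', rfl, .step hs (fun ψ hψ => ho ψ hψ) hrun⟩
      · exact .inr ⟨rfl, s', hf, .step hs (fun ψ hψ => ho ψ hψ) hrun⟩
    | plusL s2 => exact absurd hs (by simp [tStep])

theorem TRun.compR_inv {r₀ r₁ : RE P V} {q q' : TState P V (.comp r₀ r₁)} {m n : ℕ}
    (h : TRun w cc α (.comp r₀ r₁) q m q' n) :
    ∀ s, q = .compR s →
      ∃ s', q' = .compR s' ∧ TRun w cc α r₁ s m s' n := by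
  induction h with
  | refl q n =>
    rintro s rfl
    exact ⟨s, rfl, .refl _ _⟩
  | @eps q q2 q'' m n he ho hr ih =>
    rintro s rfl
    cases q2 with
    | compL s2 => exact absurd he (by simp [tEps])
    | compR s2 =>
      obtain ⟨s', rfl, hrun⟩ := ih s2 rfl
      exact ⟨s', rfl, .eps he (fun ψ hψ => ho ψ hψ) hrun⟩
  | @step q q2 q'' m n hs ho hr ih =>
    rintro s rfl
    cases q2 with
    | compL s2 => exact absurd hs (by simp [tStep])
    | compR s2 =>
      obtain ⟨s', rfl, hrun⟩ := ih s2 rfl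
      exact ⟨s', rfl, .step hs (fun ψ hψ => ho ψ hψ) hrun⟩

theorem TRun.compL_inv {r₀ r₁ : RE P V} {q q' : TState P V (.comp r₀ r₁)} {m n : ℕ}
    (h : TRun w cc α (.comp r₀ r₁) q m q' n) :
    ∀ s, q = .compL s →
      (∃ s', q' = .compL s' ∧ TRun w cc α r₀ s m s' n) ∨
      (∃ s' k f₀, q' = .compR s' ∧ tFinal r₀ f₀ ∧
        TRun w cc α r₀ s m f₀ k ∧ TRun w cc α r₁ (tInit r₁) k s' n) := by
  induction h with
  | refl q n =>
    rintro s rfl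
    exact .inl ⟨s, rfl, .refl _ _⟩
  | @eps q q2 q'' m n he ho hr ih =>
    rintro s rfl
    cases q2 with
    | compL s2 =>
      rcases ih s2 rfl with ⟨s', rfl, hrun⟩ | ⟨s', k, f₀, rfl, hf, h1, h2⟩
      · exact .inl ⟨s', rfl, .eps he (fun ψ hψ => ho ψ hψ) hrun⟩
      · exact .inr ⟨s', k, f₀, rfl, hf, .eps he (fun ψ hψ => ho ψ hψ) h1, h2⟩
    | compR s2 =>
      obtain ⟨hf, rfl⟩ : tFinal r₀ s ∧ s2 = tInit r₁ := he
      obtain ⟨s', rfl, hrun⟩ := hr.compR_inv _ rfl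
      exact .inr ⟨s', m, s, rfl, hf, .refl _ _, hrun⟩
  | @step q q2 q'' m n hs ho hr ih =>
    rintro s rfl
    cases q2 with
    | compL s2 =>
      rcases ih s2 rfl with ⟨s', rfl, hrun⟩ | ⟨s', k, f₀, rfl, hf, h1, h2⟩
      · exact .inl ⟨s', rfl, .step hs (fun ψ hψ => ho ψ hψ) hrun⟩
      · exact .inr ⟨s', k, f₀, rfl, hf, .step hs (fun ψ hψ => ho ψ hψ) h1, h2⟩
    | compR s2 => exact absurd hs (by simp [tStep])

/-- Iterated runs through the inner automaton of a star, with restarts. -/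
inductive SRun (w : ℕ → P → Prop) (cc : ℕ → Prop) (α : V → ℕ) (r : RE P V) :
    TState P V r → ℕ → TState P V r → ℕ → Prop where
  | base {s m s' n} : TRun w cc α r s m s' n → SRun w cc α r s m s' n
  | loop {s m f k s' n} : TRun w cc α r s m f k → tFinal r f →
      SRun w cc α r (tInit r) k s' n → SRun w cc α r s m s' n

theorem SRun.eps {r : RE P V} {s s2 s' : TState P V r} {m n : ℕ}
    (he : tEps r s s2) (ho : TOk w cc α r s m)
    (h : SRun w cc α r s2 m s' n) : SRun w cc α r s m s' n := by
  cases h with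
  | base h1 => exact .base (.eps he ho h1)
  | loop h1 hf h2 => exact .loop (.eps he ho h1) hf h2

theorem SRun.step {r : RE P V} {s s2 s' : TState P V r} {m n : ℕ}
    (hs : tStep r s (w m) s2) (ho : TOk w cc α r s m)
    (h : SRun w cc α r s2 (m + 1) s' n) : SRun w cc α r s m s' n := by
  cases h with
  | base h1 => exact .base (.step hs ho h1)
  | loop h1 hf h2 => exact .loop (.step hs ho h1) hf h2

theorem SRun.restart {r : RE P V} {s s' : TState P V r} {m n : ℕ}
    (hf : tFinal r s) (h : SRun w cc α r (tInit r) m s' n) :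
    SRun w cc α r s m s' n := .loop (.refl _ _) hf h

theorem TRun.starIn_inv {r : RE P V} {q q' : TState P V (.star r)} {m n : ℕ}
    (h : TRun w cc α (.star r) q m q' n) :
    ∀ s, q = .starIn s →
      (∃ s', q' = .starIn s' ∧ SRun w cc α r s m s' n) ∨
      (q' = .starFin r ∧ ∃ s', tFinal r s' ∧ SRun w cc α r s m s' n) := by
  induction h with
  | refl q n =>
    rintro s rfl
    exact .inl ⟨s, rfl, .base (.refl _ _)⟩
  | @eps q q2 q'' m n he ho hr ih =>
    rintro s rfl
    cases q2 with
    | starInit => exact absurd he (by simp [tEps])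
    | starFin =>
      obtain ⟨rfl, rfl⟩ := hr.starFin_inv
      exact .inr ⟨rfl, s, he, .base (.refl _ _)⟩
    | starIn s2 =>
      have he' : tEps r s s2 ∨ (tFinal r s ∧ s2 = tInit r) := he
      rcases he' with he' | ⟨hf, rfl⟩
      · rcases ih s2 rfl with ⟨s', rfl, hrun⟩ | ⟨rfl, s', hf', hrun⟩
        · exact .inl ⟨s', rfl, hrun.eps he' (fun ψ hψ => ho ψ hψ)⟩
        · exact .inr ⟨rfl, s', hf', hrun.eps he' (fun ψ hψ => ho ψ hψ)⟩
      · rcases ih (tInit r) rfl with ⟨s', rfl, hrun⟩ | ⟨rfl, s', hf', hrun⟩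
        · exact .inl ⟨s', rfl, hrun.restart hf⟩
        · exact .inr ⟨rfl, s', hf', hrun.restart hf⟩
  | @step q q2 q'' m n hs ho hr ih =>
    rintro s rfl
    cases q2 with
    | starInit => exact absurd hs (by simp [tStep])
    | starFin => exact absurd hs (by simp [tStep])
    | starIn s2 =>
      rcases ih s2 rfl with ⟨s', rfl, hrun⟩ | ⟨rfl, s', hf', hrun⟩
      · exact .inl ⟨s', rfl, hrun.step hs (fun ψ hψ => ho ψ hψ)⟩
      · exact .inr ⟨rfl, s', hf', hrun.step hs (fun ψ hψ => ho ψ hψ)⟩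

end ThompsonInv
section ThompsonMain

variable {P V : Type} {w : ℕ → P → Prop} {cc : ℕ → Prop} {α : V → ℕ}

theorem match_star_nil {r : RE P V} {m : ℕ} : Match w cc α (.star r) m m := by
  simp only [Match]
  exact ⟨0, fun _ => m, rfl, rfl, fun i hi => absurd hi (by omega)⟩

theorem match_star_cons {r : RE P V} {m k n : ℕ}
    (h1 : Match w cc α r m k) (h2 : Match w cc α (.star r) k n) :
    Match w cc α (.star r) m n := by
  simp only [Match] at h2 ⊢
  obtain ⟨j, f, h0, hj, hstep⟩ := h2
  refine ⟨j + 1, fun i => if i = 0 then m else f (i - 1), rfl, by simp [hj], ?_⟩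
  intro i hi
  cases i with
  | zero => simpa [h0] using h1
  | succ i => simpa using hstep i (by omega)

theorem match_star_single {r : RE P V} {m n : ℕ} (h : Match w cc α r m n) :
    Match w cc α (.star r) m n := match_star_cons h match_star_nil

theorem srun_match {r : RE P V} {s s' : TState P V r} {m n : ℕ}
    (HM : ∀ a b, (∃ qf, tFinal r qf ∧ TRun w cc α r (tInit r) a qf b) →
      Match w cc α r a b)
    (h : SRun w cc α r s m s' n) :
    s = tInit r → tFinal r s' → Match w cc α (.star r) m n := by
  induction h with
  | base hr =>
    rintro rfl hf
    exact match_star_single (HM _ _ ⟨_, hf, hr⟩)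
  | loop hr hf _ ih =>
    rintro rfl hf'
    exact match_star_cons (HM _ _ ⟨_, hf, hr⟩) (ih rfl hf')

theorem match_star_srun {r : RE P V}
    (HM : ∀ a b, Match w cc α r a b →
      ∃ qf, tFinal r qf ∧ TRun w cc α r (tInit r) a qf b) :
    ∀ (k : ℕ) (f : ℕ → ℕ), (∀ i, i < k + 1 → Match w cc α r (f i) (f (i + 1))) →
      ∃ qf, tFinal r qf ∧
        TRun w cc α (.star r) (.starIn (tInit r)) (f 0) (.starIn qf) (f (k + 1)) := by
  intro k
  induction k with
  | zero =>
    intro f hstep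
    obtain ⟨qf, hf, hrun⟩ := HM (f 0) (f 1) (hstep 0 (by omega))
    exact ⟨qf, hf, hrun.liftStarIn⟩
  | succ k ih =>
    intro f hstep
    obtain ⟨qf0, hf0, hrun0⟩ := HM (f 0) (f 1) (hstep 0 (by omega))
    obtain ⟨qf, hf, hrun⟩ := ih (fun i => f (i + 1)) (fun i hi => hstep (i + 1) (by omega))
    refine ⟨qf, hf, hrun0.liftStarIn.trans (.eps (q' := .starIn (tInit r)) ?_ ?_ hrun)⟩
    · exact Or.inr ⟨hf0, rfl⟩
    · intro ψ hψ
      have h' : tMark r qf0 = some ψ := hψ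
      rw [tMark_final hf0] at h'
      cases h'

/-- Correctness of the Thompson automaton, stated with `TRun`. -/
theorem trun_iff_match : (r : RE P V) → (m n : ℕ) →
    ((∃ qf, tFinal r qf ∧ TRun w cc α r (tInit r) m qf n) ↔ Match w cc α r m n)
  | .prop φ, m, n => by
    simp only [Match]
    constructor
    · rintro ⟨qf, hf, hrun⟩
      cases hrun with
      | refl => exact absurd hf (by simp [tFinal, tInit])
      | eps he => exact absurd he (by simp [tEps, tInit])
      | @step _ q2 _ _ _ hs ho hr =>
        obtain ⟨rfl, hev⟩ : q2 = .propFin φ ∧ PropF.eval (w m) φ := hs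
        obtain ⟨rfl, rfl⟩ := hr.propFin_inv
        exact ⟨rfl, hev⟩
    · rintro ⟨rfl, hev⟩
      exact ⟨.propFin φ, trivial,
        .step (q' := .propFin φ) ⟨rfl, hev⟩ (TOk_of_none rfl) (.refl _ _)⟩
  | .test ψ, m, n => by
    simp only [Match]
    constructor
    · rintro ⟨qf, hf, hrun⟩
      cases hrun with
      | refl => exact absurd hf (by simp [tFinal, tInit])
      | @eps _ q2 _ _ _ he ho hr =>
        have h2 : q2 = .testFin ψ := he
        subst h2
        obtain ⟨rfl, rfl⟩ := hr.testFin_inv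
        exact ⟨rfl, ho ψ rfl⟩
      | step hs => exact absurd hs (by simp [tStep, tInit])
    · rintro ⟨rfl, hsat⟩
      refine ⟨.testFin ψ, trivial, .eps (q' := .testFin ψ) rfl ?_ (.refl _ _)⟩
      intro ψ' hψ'
      obtain rfl : ψ = ψ' := by simpa [tMark, tInit] using hψ'
      exact hsat
  | .plus r₀ r₁, m, n => by
    have ih₀ := trun_iff_match r₀
    have ih₁ := trun_iff_match r₁
    simp only [Match]
    constructor
    · rintro ⟨qf, hf, hrun⟩
      cases hrun with
      | refl => exact absurd hf (by simp [tFinal, tInit])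
      | @eps _ q2 _ _ _ he ho hr =>
        have he' : q2 = .plusL (tInit r₀) ∨ q2 = .plusR (tInit r₁) := he
        rcases he' with rfl | rfl
        · rcases hr.plusL_inv _ rfl with ⟨s', rfl, _⟩ | ⟨rfl, s', hf', hrun'⟩
          · exact absurd hf (by simp [tFinal])
          · exact .inl ((ih₀ m n).1 ⟨s', hf', hrun'⟩)
        · rcases hr.plusR_inv _ rfl with ⟨s', rfl, _⟩ | ⟨rfl, s', hf', hrun'⟩
          · exact absurd hf (by simp [tFinal])
          · exact .inr ((ih₁ m n).1 ⟨s', hf', hrun'⟩)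
      | step hs => exact absurd hs (by simp [tStep, tInit])
    · rintro (hm | hm)
      · obtain ⟨qf, hf, hrun⟩ := (ih₀ m n).2 hm
        exact ⟨.plusFin r₀ r₁, trivial,
          .eps (q' := .plusL (tInit r₀)) (Or.inl rfl) (TOk_of_none rfl)
            (hrun.liftPlusL.trans
              (.eps (q' := .plusFin r₀ r₁) hf
                (TOk_of_none ((tMark_plusL r₀ r₁ qf).trans (tMark_final hf)))
                (.refl _ _)))⟩
      · obtain ⟨qf, hf, hrun⟩ := (ih₁ m n).2 hm
        exact ⟨.plusFin r₀ r₁, trivial,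
          .eps (q' := .plusR (tInit r₁)) (Or.inr rfl) (TOk_of_none rfl)
            (hrun.liftPlusR.trans
              (.eps (q' := .plusFin r₀ r₁) hf
                (TOk_of_none ((tMark_plusR r₀ r₁ qf).trans (tMark_final hf)))
                (.refl _ _)))⟩
  | .comp r₀ r₁, m, n => by
    have ih₀ := trun_iff_match r₀
    have ih₁ := trun_iff_match r₁
    simp only [Match]
    constructor
    · rintro ⟨qf, hf, hrun⟩
      rcases hrun.compL_inv _ rfl with ⟨s', rfl, _⟩ | ⟨s', k, f₀, rfl, hf₀, h1, h2⟩
      · exact absurd hf (by simp [tFinal])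
      · exact ⟨k, (ih₀ m k).1 ⟨f₀, hf₀, h1⟩, (ih₁ k n).1 ⟨s', hf, h2⟩⟩
    · rintro ⟨k, h₀, h₁⟩
      obtain ⟨f₀, hf₀, hrun₀⟩ := (ih₀ m k).2 h₀
      obtain ⟨f₁, hf₁, hrun₁⟩ := (ih₁ k n).2 h₁
      exact ⟨.compR f₁, hf₁,
        hrun₀.liftCompL.trans
          (.eps (q' := .compR (tInit r₁)) ⟨hf₀, rfl⟩
            (TOk_of_none ((tMark_compL r₀ r₁ f₀).trans (tMark_final hf₀)))
            hrun₁.liftCompR)⟩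
  | .star r, m, n => by
    have ihr := trun_iff_match r
    constructor
    · rintro ⟨qf, hf, hrun⟩
      cases hrun with
      | refl => exact absurd hf (by simp [tFinal, tInit])
      | @eps _ q2 _ _ _ he ho hr =>
        have he' : q2 = .starFin r ∨ q2 = .starIn (tInit r) := he
        rcases he' with rfl | rfl
        · obtain ⟨rfl, rfl⟩ := hr.starFin_inv
          exact match_star_nil
        · rcases hr.starIn_inv _ rfl with ⟨s', rfl, _⟩ | ⟨rfl, s', hf', hsrun⟩
          · exact absurd hf (by simp [tFinal])
          · exact srun_match (fun a b => (ihr a b).1) hsrun rfl hf'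
      | step hs => exact absurd hs (by simp [tStep, tInit])
    · intro hm
      simp only [Match] at hm
      obtain ⟨k, f, h0, hk, hstep⟩ := hm
      cases k with
      | zero =>
        subst h0; subst hk
        exact ⟨.starFin r, trivial,
          .eps (q' := .starFin r) (Or.inl rfl) (TOk_of_none rfl) (.refl _ _)⟩
      | succ k =>
        obtain ⟨qf, hf, hrun⟩ :=
          match_star_srun (fun a b => (ihr a b).2) k f (fun i hi => hstep i hi)
        subst h0; subst hk
        exact ⟨.starFin r, trivial,
          .eps (q' := .starIn (tInit r)) (Or.inr rfl) (TOk_of_none rfl)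
            (hrun.trans (.eps (q' := .starFin r) hf
              (TOk_of_none ((tMark_starIn r qf).trans (tMark_final hf)))
              (.refl _ _)))⟩

end ThompsonMain
section ThompsonLists

variable {P V : Type} {w : ℕ → P → Prop} {cc : ℕ → Prop} {α : V → ℕ}

theorem epsPath_trun {r : RE P V} :
    ∀ (l : List (TState P V r)) (a b : TState P V r) (m : ℕ),
      l.Chain' (tEps r) → l.head? = some a → l.getLast? = some b →
      (∀ ψ ∈ l.filterMap (tMark r), Sat w cc α ψ m) →
      TRun w cc α r a m b m
  | [], a, b, m => by simp
  | [x], a, b, m => by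
    intro _ ha hb _
    obtain rfl : x = a := by simpa using ha
    obtain rfl : x = b := by simpa using hb
    exact .refl _ _
  | x :: y :: t, a, b, m => by
    intro hch ha hb hmk
    obtain rfl : x = a := by simpa using ha
    have hch := List.isChain_cons_cons.mp hch
    refine .eps hch.1 ?_ (epsPath_trun (y :: t) y b m hch.2 rfl (by simpa using hb) ?_)
    · intro ψ hψ
      exact hmk ψ (List.mem_filterMap.mpr ⟨x, List.mem_cons_self, hψ⟩)
    · intro ψ hψ
      refine hmk ψ ?_
      rw [List.mem_filterMap] at hψ ⊢
      obtain ⟨s, hs1, hs2⟩ := hψ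
      exact ⟨s, List.mem_cons_of_mem _ hs1, hs2⟩

theorem lists_to_trun {r : RE P V} {n : ℕ} {q : ℕ → TState P V r}
    {π : ℕ → List (TState P V r)} {qf : TState P V r}
    (hpath : ∀ i, i ≤ n → TEpsPath r (π i) ∧ (π i).head? = some (q i))
    (hstep : ∀ i, i < n → ∃ q', (π i).getLast? = some q' ∧ tStep r q' (w i) (q (i + 1)))
    (hlast : (π n).getLast? = some qf)
    (hmk : ∀ i, i ≤ n → ∀ ψ ∈ (π i).filterMap (tMark r), Sat w cc α ψ i) :
    ∀ d i, i + d = n → TRun w cc α r (q i) i qf n := by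
  intro d
  induction d with
  | zero =>
    intro i hi
    have hin : i = n := by omega
    subst hin
    exact epsPath_trun _ _ _ _ (hpath i le_rfl).1.2 (hpath i le_rfl).2 hlast (hmk i le_rfl)
  | succ d ih =>
    intro i hi
    have hin : i < n := by omega
    obtain ⟨q', hq', hs⟩ := hstep i hin
    have h1 : TRun w cc α r (q i) i q' i :=
      epsPath_trun _ _ _ _ (hpath i hin.le).1.2 (hpath i hin.le).2 hq' (hmk i hin.le)
    have ho : TOk w cc α r q' i := fun ψ hψ =>
      hmk i hin.le ψ (List.mem_filterMap.mpr ⟨q', List.mem_of_getLast? hq', hψ⟩)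
    exact h1.trans (.step hs ho (ih (i + 1) (by omega)))

theorem trun_to_lists {r : RE P V} {q0 qf : TState P V r} {m n : ℕ}
    (h : TRun w cc α r q0 m qf n) :
    tFinal r qf →
    ∃ (qs : ℕ → TState P V r) (π : ℕ → List (TState P V r)),
      qs m = q0 ∧
      (∀ i, m ≤ i → i ≤ n → TEpsPath r (π i) ∧ (π i).head? = some (qs i)) ∧
      (∀ i, m ≤ i → i < n → ∃ q', (π i).getLast? = some q' ∧
        tStep r q' (w i) (qs (i + 1))) ∧
      (π n).getLast? = some qf ∧
      (∀ i, m ≤ i → i ≤ n → ∀ ψ ∈ (π i).filterMap (tMark r), Sat w cc α ψ i) := by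
  induction h with
  | refl q n =>
    intro hf
    refine ⟨fun _ => q, fun _ => [q], rfl, ?_, ?_, by simp, ?_⟩
    · intro i _ _
      exact ⟨⟨by simp, List.isChain_singleton q⟩, rfl⟩
    · intro i h1 h2; omega
    · intro i _ _ ψ hψ
      rw [List.mem_filterMap] at hψ
      obtain ⟨s, hs1, hs2⟩ := hψ
      obtain rfl : s = q := by simpa using hs1
      rw [tMark_final hf] at hs2
      cases hs2
  | @eps q q2 q'' m n he ho hr ih =>
    intro hf
    obtain ⟨qs, π, hq0, hpath, hstep, hlast, hmk⟩ := ih hf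
    have hmn : m ≤ n := hr.le
    have hπm := hpath m le_rfl hmn
    refine ⟨Function.update qs m q, Function.update π m (q :: π m), by simp, ?_, ?_, ?_, ?_⟩
    · intro i h1 h2
      by_cases heq : i = m
      · rw [heq, Function.update_self, Function.update_self]
        refine ⟨⟨by simp, List.isChain_cons.mpr ⟨?_, hπm.1.2⟩⟩, rfl⟩
        intro y hy
        have hy' : y = qs m := by
          have hh := hπm.2
          rw [hh] at hy
          exact (by simpa using hy : qs m = y).symm
        rw [hy', hq0]
        exact he
      · rw [Function.update_of_ne heq, Function.update_of_ne heq]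
        exact hpath i (by omega) h2
    · intro i h1 h2
      by_cases heq : i = m
      · subst heq
        obtain ⟨q', hq', hs⟩ := hstep i le_rfl h2
        refine ⟨q', ?_, ?_⟩
        · rw [Function.update_self]
          rcases hl : π i with _ | ⟨x, t⟩
          · rw [hl] at hq'; simp at hq'
          · rw [hl] at hq'
            rw [List.getLast?_cons_cons]
            exact hq'
        · rw [Function.update_of_ne (by omega)]
          exact hs
      · obtain ⟨q', hq', hs⟩ := hstep i (by omega) h2
        refine ⟨q', by rw [Function.update_of_ne heq]; exact hq', ?_⟩
        rw [Function.update_of_ne (by omega)]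
        exact hs
    · by_cases hnm : n = m
      · subst hnm
        rw [Function.update_self]
        rcases hl : π n with _ | ⟨x, t⟩
        · rw [hl] at hlast; simp at hlast
        · rw [hl] at hlast
          rw [List.getLast?_cons_cons]
          exact hlast
      · rw [Function.update_of_ne hnm]
        exact hlast
    · intro i h1 h2 ψ hψ
      by_cases heq : i = m
      · subst heq
        rw [Function.update_self] at hψ
        rw [List.mem_filterMap] at hψ
        obtain ⟨s, hs1, hs2⟩ := hψ
        rcases List.mem_cons.mp hs1 with rfl | hs1
        · exact ho ψ hs2
        · exact hmk i le_rfl h2 ψ (List.mem_filterMap.mpr ⟨s, hs1, hs2⟩)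
      · rw [Function.update_of_ne heq] at hψ
        exact hmk i (by omega) h2 ψ hψ
  | @step q q2 q'' m n hs ho hr ih =>
    intro hf
    obtain ⟨qs, π, hq0, hpath, hstep, hlast, hmk⟩ := ih hf
    have hmn : m + 1 ≤ n := hr.le
    refine ⟨Function.update qs m q, Function.update π m [q], by simp, ?_, ?_, ?_, ?_⟩
    · intro i h1 h2
      by_cases heq : i = m
      · rw [heq, Function.update_self, Function.update_self]
        exact ⟨⟨by simp, List.isChain_singleton q⟩, rfl⟩
      · rw [Function.update_of_ne heq, Function.update_of_ne heq]
        exact hpath i (by omega) h2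
    · intro i h1 h2
      by_cases heq : i = m
      · subst heq
        refine ⟨q, by rw [Function.update_self]; simp, ?_⟩
        rw [Function.update_of_ne (by omega), hq0]
        exact hs
      · obtain ⟨q', hq', hstp⟩ := hstep i (by omega) h2
        refine ⟨q', by rw [Function.update_of_ne heq]; exact hq', ?_⟩
        rw [Function.update_of_ne (by omega)]
        exact hstp
    · rw [Function.update_of_ne (by omega)]
      exact hlast
    · intro i h1 h2 ψ hψ
      by_cases heq : i = m
      · subst heq
        rw [Function.update_self] at hψ
        rw [List.mem_filterMap] at hψ
        obtain ⟨s, hs1, hs2⟩ := hψ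
        obtain rfl : s = q := by simpa using hs1
        exact ho ψ hs2
      · rw [Function.update_of_ne heq] at hψ
        exact hmk i (by omega) h2 ψ hψ

end ThompsonLists
/-- correctness of the marked ε-NFA `A_r`. The automaton has an
accepting run `q₀ ⋯ q_n` on `w₀ ⋯ w_{n-1}` (each step an ε-path `π_i` from
`q_i` followed by a `w_i`-transition to `q_{i+1}`, and a final ε-path `π_n`
from `q_n` into a final state) such that every test marking visited along
`π_i` is satisfied by the suffix `w_i w_{i+1} ⋯`, if and only if
`(0, n) ∈ R(r, w)`. -/
theorem thompson_correct (r : RE P V)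
    (w : ℕ → P → Prop) (c : ℕ → Prop) (α : V → ℕ) (n : ℕ) :
    (∃ (q : ℕ → TState P V r) (π : ℕ → List (TState P V r)),
      q 0 = tInit r ∧
      (∀ i, i ≤ n → TEpsPath r (π i) ∧ (π i).head? = some (q i)) ∧
      (∀ i, i < n → ∃ q', (π i).getLast? = some q' ∧
        tStep r q' (w i) (q (i + 1))) ∧
      (∃ qf, (π n).getLast? = some qf ∧ tFinal r qf) ∧
      (∀ i, i ≤ n → ∀ ψ ∈ (π i).filterMap (tMark r), Sat w c α ψ i)) ↔
    Match w c α r 0 n := by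
  rw [← trun_iff_match r 0 n]
  constructor
  · rintro ⟨q, π, hq0, hpath, hstep, ⟨qf, hlast, hfin⟩, hmk⟩
    refine ⟨qf, hfin, ?_⟩
    have := lists_to_trun hpath hstep hlast hmk n 0 (by omega)
    rwa [hq0] at this
  · rintro ⟨qf, hfin, hrun⟩
    obtain ⟨qs, π, hq0, hpath, hstep, hlast, hmk⟩ := trun_to_lists hrun hfin
    exact ⟨qs, π, hq0, fun i hi => hpath i (Nat.zero_le i) hi,
      fun i hi => hstep i (Nat.zero_le i) hi, ⟨qf, hlast, hfin⟩,
      fun i hi => hmk i (Nat.zero_le i) hi⟩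

end PLDLPaper
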